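/- Let G be a simple graph with n vertices and list chromatic number χ_ℓ = s, and let 1 ≤ r ≤ s. Then at least one of the inequalities χ_ℓ · λ_r(G) ≥ r·n and χ_ℓ · λ_{s−r}(G) ≥ (s−r)·n holds. -/
import Mathlib


open SimpleGraph

/-- `c` properly colors each vertex of `S` from its list `L`. -/
def IsPartialListColoring {V : Type*} (G : SimpleGraph V) (L : V → Finset ℕ)
    (S : Set V) (c : V → ℕ) : Prop :=
  (∀ v ∈ S, c v ∈ L v) ∧ ∀ u ∈ S, ∀ v ∈ S, G.Adj u v → c u ≠ c v

/-- `λ_L(G)`: the maximum number of vertices properly colorable from the lists of `L`. -/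
noncomputable def lamL {V : Type*} (G : SimpleGraph V) (L : V → Finset ℕ) : ℕ :=
  sSup {k | ∃ (S : Finset V) (c : V → ℕ), S.card = k ∧ IsPartialListColoring G L S c}

/-- `λ_t(G)`: the minimum of `λ_L(G)` over all `t`-list assignments `L`. -/
noncomputable def lam {V : Type*} (G : SimpleGraph V) (t : ℕ) : ℕ :=
  sInf {m | ∃ L : V → Finset ℕ, (∀ v, (L v).card = t) ∧ lamL G L = m}

/-- `G` admits a full proper coloring from the lists of `L`. -/
def ListColorable {V : Type*} (G : SimpleGraph V) (L : V → Finset ℕ) : Prop :=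
  ∃ c : V → ℕ, (∀ v, c v ∈ L v) ∧ ∀ u v, G.Adj u v → c u ≠ c v

/-- The list chromatic number of `G`. -/
noncomputable def listChromaticNumber {V : Type*} (G : SimpleGraph V) : ℕ :=
  sInf {k | ∀ L : V → Finset ℕ, (∀ v, (L v).card = k) → ListColorable G L}

lemma lamL_ge {V : Type*} [Fintype V] (G : SimpleGraph V) (L : V → Finset ℕ)
    (S : Finset V) (c : V → ℕ) (h : IsPartialListColoring G L S c) :
    S.card ≤ lamL G L := by
  apply le_csSup
  · refine ⟨Fintype.card V, ?_⟩
    rintro k ⟨T, c', hT, -⟩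
    exact hT ▸ T.card_le_univ
  · exact ⟨S, c, rfl, h⟩

lemma key_lemma {V : Type*} [Fintype V] (G : SimpleGraph V) (s : ℕ)
    (hcol : ∀ L : V → Finset ℕ, (∀ v, (L v).card = s) → ListColorable G L)
    (r : ℕ) (hrs : r ≤ s)
    (L1 L2 : V → Finset ℕ) (h1 : ∀ v, (L1 v).card = r) (h2 : ∀ v, (L2 v).card = s - r) :
    Fintype.card V ≤ lamL G L1 + lamL G L2 := by
  classical
  set N : ℕ := (Finset.univ.sup fun v => (L1 v).sup id) + 1 with hN
  have hlt : ∀ v : V, ∀ x ∈ L1 v, x < N := by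
    intro v x hx
    have hA : (L1 v).sup id ≤ Finset.univ.sup fun v => (L1 v).sup id :=
      Finset.le_sup (f := fun v => (L1 v).sup id) (Finset.mem_univ v)
    have hB : x ≤ (L1 v).sup id := Finset.le_sup (f := id) hx
    omega
  set L : V → Finset ℕ := fun v => L1 v ∪ (L2 v).image (· + N) with hL
  have hdisj : ∀ v, Disjoint (L1 v) ((L2 v).image (· + N)) := by
    intro v
    rw [Finset.disjoint_left]
    intro x hx hx'
    obtain ⟨y, -, hy⟩ := Finset.mem_image.mp hx'
    have := hlt v x hx
    omega
  have hcard : ∀ v, (L v).card = s := by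
    intro v
    rw [hL]
    simp only
    rw [Finset.card_union_of_disjoint (hdisj v),
      Finset.card_image_of_injective _ (add_left_injective N), h1, h2]
    omega
  obtain ⟨c, hc1, hc2⟩ := hcol L hcard
  set S1 : Finset V := Finset.univ.filter (fun v => c v ∈ L1 v) with hS1
  set S2 : Finset V := S1ᶜ with hS2
  have hmem2 : ∀ v ∈ S2, ∃ x ∈ L2 v, c v = x + N := by
    intro v hv
    have hv' : c v ∉ L1 v := by
      simpa [hS2, hS1] using hv
    have := hc1 v
    rw [hL] at this
    simp only [Finset.mem_union] at this
    rcases this with h | h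
    · exact absurd h hv'
    · obtain ⟨x, hx, hx'⟩ := Finset.mem_image.mp h
      exact ⟨x, hx, hx'.symm⟩
  have hp1 : IsPartialListColoring G L1 S1 c := by
    constructor
    · intro v hv
      simpa [hS1] using hv
    · intro u _ v _ huv
      exact hc2 u v huv
  have hp2 : IsPartialListColoring G L2 S2 (fun v => c v - N) := by
    constructor
    · intro v hv
      obtain ⟨x, hx, hx'⟩ := hmem2 v hv
      simpa [hx'] using hx
    · intro u hu v hv huv
      obtain ⟨x, hx, hx'⟩ := hmem2 u hu
      obtain ⟨y, hy, hy'⟩ := hmem2 v hv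
      have := hc2 u v huv
      simp only [hx', hy']
      omega
  have g1 := lamL_ge G L1 S1 c hp1
  have g2 := lamL_ge G L2 S2 (fun v => c v - N) hp2
  have : S1.card + S2.card = Fintype.card V := Finset.card_add_card_compl S1
  omega

theorem agh_conjecture_half {V : Type*} [Fintype V] (G : SimpleGraph V)
    (r s : ℕ) (hs : listChromaticNumber G = s) (hr : 1 ≤ r) (hrs : r ≤ s) :
    r * Fintype.card V ≤ s * lam G r ∨
      (s - r) * Fintype.card V ≤ s * lam G (s - r) := by
  classical
  have hsne : {k | ∀ L : V → Finset ℕ, (∀ v, (L v).card = k) → ListColorable G L}.Nonempty := by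
    by_contra h
    rw [Set.not_nonempty_iff_eq_empty] at h
    rw [listChromaticNumber, h, Nat.sInf_empty] at hs
    omega
  have hcol : ∀ L : V → Finset ℕ, (∀ v, (L v).card = s) → ListColorable G L := by
    have := Nat.sInf_mem hsne
    rwa [← listChromaticNumber, hs] at this
  -- get minimizing assignments
  have hne1 : {m | ∃ L : V → Finset ℕ, (∀ v, (L v).card = r) ∧ lamL G L = m}.Nonempty :=
    ⟨_, fun _ => Finset.range r, fun _ => Finset.card_range r, rfl⟩
  have hne2 : {m | ∃ L : V → Finset ℕ, (∀ v, (L v).card = s - r) ∧ lamL G L = m}.Nonempty :=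
    ⟨_, fun _ => Finset.range (s - r), fun _ => Finset.card_range (s - r), rfl⟩
  obtain ⟨L1, hL1, hL1'⟩ := Nat.sInf_mem hne1
  obtain ⟨L2, hL2, hL2'⟩ := Nat.sInf_mem hne2
  have key : Fintype.card V ≤ lam G r + lam G (s - r) := by
    have := key_lemma G s hcol r hrs L1 L2 hL1 hL2
    rw [lam, lam, ← hL1', ← hL2']
    exact this
  by_contra h
  push_neg at h
  obtain ⟨h1, h2⟩ := h
  have e1 : s * Fintype.card V ≤ s * (lam G r + lam G (s - r)) :=
    Nat.mul_le_mul_left s key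
  have e2 : s * (lam G r + lam G (s - r)) = s * lam G r + s * lam G (s - r) := Nat.mul_add s _ _
  have e3 : r * Fintype.card V + (s - r) * Fintype.card V = s * Fintype.card V := by
    rw [← Nat.add_mul, Nat.add_sub_cancel' hrs]
  have contra : s * Fintype.card V < s * Fintype.card V := by
    calc s * Fintype.card V ≤ s * lam G r + s * lam G (s - r) := e2 ▸ e1
      _ < r * Fintype.card V + (s - r) * Fintype.card V := Nat.add_lt_add h1 h2
      _ = s * Fintype.card V := e3
  exact absurd contra (lt_irrefl _)
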